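/- Let F be a finite field with q elements and let s, d, t be positive integers with s > dt. Let j be a positive integer such that either q^j + 1 ≥ s, or q^j is even, s − dt ∈ {3, q^j − 1}, and q^j + 2 ≥ s. Then there exists a block totally nonsingular matrix consisting of an (s − dt) × dt array of invertible j × j blocks over F. -/

import Mathlib

/-- A block matrix (an r × u array of j × j blocks) is block totally nonsingular if
every square sub-array of blocks is nonsingular. -/
def IsBlockTotallyNonsingular {F : Type*} [Field F] {r u j : ℕ}
    (A : Matrix (Fin r × Fin j) (Fin u × Fin j) F) : Prop :=
  ∀ (k : ℕ), 1 ≤ k → ∀ (ρ : Fin k → Fin r) (σ : Fin k → Fin u),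
    Function.Injective ρ → Function.Injective σ →
      (Matrix.of fun p q : Fin k × Fin j => A (ρ p.1, p.2) (σ q.1, q.2)).det ≠ 0

open Polynomial Matrix

/-- scalar total nonsingularity -/
def ScalarTN {K : Type*} [Field K] {r u : ℕ} (M : Matrix (Fin r) (Fin u) K) : Prop :=
  ∀ (k : ℕ) (ρ : Fin k → Fin r) (σ : Fin k → Fin u),
    Function.Injective ρ → Function.Injective σ → (M.submatrix ρ σ).det ≠ 0

lemma ScalarTN.submatrix {K : Type*} [Field K] {r u r' u' : ℕ}
    {M : Matrix (Fin r) (Fin u) K} (hM : ScalarTN M)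
    (f : Fin r' → Fin r) (g : Fin u' → Fin u)
    (hf : Function.Injective f) (hg : Function.Injective g) :
    ScalarTN (M.submatrix f g) := by
  intro k ρ σ hρ hσ
  rw [Matrix.submatrix_submatrix]
  exact hM k (f ∘ ρ) (g ∘ σ) (hf.comp hρ) (hg.comp hσ)

lemma ScalarTN.transpose {K : Type*} [Field K] {r u : ℕ}
    {M : Matrix (Fin r) (Fin u) K} (hM : ScalarTN M) : ScalarTN Mᵀ := by
  intro k ρ σ hρ hσ
  rw [show Mᵀ.submatrix ρ σ = (M.submatrix σ ρ)ᵀ from rfl, Matrix.det_transpose]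
  exact hM k σ ρ hσ hρ

lemma blockTN_of_scalarTN {F K : Type*} [Field F] [Field K] [Algebra F K] {j r u : ℕ}
    (b : Module.Basis (Fin j) F K) (M : Matrix (Fin r) (Fin u) K) (hM : ScalarTN M) :
    IsBlockTotallyNonsingular (Matrix.of fun (p : Fin r × Fin j) (q : Fin u × Fin j) =>
      Algebra.leftMulMatrix b (M p.1 q.1) p.2 q.2) := by
  intro k _ ρ σ hρ hσ
  have h1 : IsUnit (M.submatrix ρ σ) :=
    (Matrix.isUnit_iff_isUnit_det _).mpr (isUnit_iff_ne_zero.mpr (hM k ρ σ hρ hσ))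
  have h2 : IsUnit ((M.submatrix ρ σ).map (Algebra.leftMulMatrix b)) := by
    have := h1.map (AlgHom.mapMatrix (m := Fin k) (Algebra.leftMulMatrix b))
    simpa [AlgHom.mapMatrix_apply] using this
  have h3 : IsUnit ((Matrix.compRingEquiv (Fin k) (Fin j) F)
      ((M.submatrix ρ σ).map (Algebra.leftMulMatrix b))) := h2.map _
  have heq : (Matrix.of fun p q : Fin k × Fin j =>
      (Matrix.of fun (p : Fin r × Fin j) (q : Fin u × Fin j) =>
        Algebra.leftMulMatrix b (M p.1 q.1) p.2 q.2) (ρ p.1, p.2) (σ q.1, q.2)) =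
      (Matrix.compRingEquiv (Fin k) (Fin j) F)
        ((M.submatrix ρ σ).map (Algebra.leftMulMatrix b)) := by
    ext ⟨p, a⟩ ⟨q, c⟩
    simp [Matrix.compRingEquiv, Matrix.compAddEquiv, Matrix.comp]
    rfl
  rw [heq]
  exact ((Matrix.isUnit_iff_isUnit_det _).mp h3).ne_zero

universe uF in
lemma exists_extension (F : Type uF) [Field F] [Fintype F] (j : ℕ) (hj : 0 < j) :
    ∃ (K : Type uF) (_ : Field K) (_ : Algebra F K) (_ : Fintype K),
      Fintype.card K = Fintype.card F ^ j ∧ Nonempty (Module.Basis (Fin j) F K) := by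
  classical
  set q := Fintype.card F with hqdef
  have hq1 : 1 < q := Fintype.one_lt_card
  have hQ1 : 1 < q ^ j := Nat.one_lt_pow hj.ne' hq1
  set g : F[X] := X ^ q ^ j - X with hg
  have hg0 : g ≠ 0 := FiniteField.X_pow_card_pow_sub_X_ne_zero F hj.ne' hq1
  have hgdeg : g.natDegree = q ^ j := FiniteField.X_pow_card_pow_sub_X_natDegree_eq F hj.ne' hq1
  set K := g.SplittingField with hK
  letI : Field K := inferInstanceAs (Field g.SplittingField)
  letI : Algebra F K := inferInstanceAs (Algebra F g.SplittingField)
  set p := ringChar F with hpdef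
  haveI hp : Fact p.Prime := ⟨CharP.char_is_prime F p⟩
  haveI : CharP F p := ringChar.charP F
  obtain ⟨m, hpm, hqm⟩ := FiniteField.card F p
  rw [← hqdef] at hqm
  haveI : CharP K p := charP_of_injective_algebraMap (algebraMap F K).injective p
  have hpQ : p ∣ q ^ j := dvd_pow (hqm ▸ dvd_pow_self p m.2.ne') hj.ne'
  have hsep : g.Separable := galois_poly_separable p (q ^ j) hpQ
  have hroot : Fintype.card (g.rootSet K) = q ^ j := by
    rw [card_rootSet_eq_natDegree hsep (SplittingField.splits g), hgdeg]
  have hQpow : q ^ j = p ^ ((m : ℕ) * j) := by rw [hqm, pow_mul]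
  have hfix : ∀ x : K, x ^ q ^ j = x := by
    have htop : ∀ x : K, x ∈ (⊤ : Subalgebra F K) := fun x => trivial
    intro x
    have hx : x ∈ Algebra.adjoin F (g.rootSet K) := by
      rw [SplittingField.adjoin_rootSet]; trivial
    rw [Algebra.mem_adjoin_iff] at hx
    refine Subring.closure_induction ?_ ?_ ?_ ?_ ?_ ?_ hx
    · rintro y (⟨r, rfl⟩ | hy)
      · rw [← map_pow, FiniteField.pow_card_pow]
      · rw [mem_rootSet_of_ne hg0] at hy
        have h0 : (y : K) ^ q ^ j - y = 0 := by
          simpa [hg, map_sub, aeval_X_pow, aeval_X] using hy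
        exact sub_eq_zero.mp h0
    · exact zero_pow (by positivity)
    · exact one_pow _
    · intro a b _ _ ha hb
      rw [hQpow] at ha hb ⊢
      rw [add_pow_char_pow, ha, hb]
    · intro a _ ha
      rw [hQpow] at ha ⊢
      rw [neg_pow, ha, neg_one_pow_char_pow]
      simp
    · intro a b _ _ ha hb
      rw [mul_pow, ha, hb]
  have huniv : g.rootSet K = Set.univ := Set.eq_univ_of_forall fun x => by
    rw [mem_rootSet_of_ne hg0]
    simp [hg, map_sub, aeval_X_pow, aeval_X, sub_eq_zero, hfix x]
  haveI : FiniteDimensional F K := IsSplittingField.finiteDimensional K g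
  haveI : Finite K := Module.finite_of_finite F
  letI : Fintype K := Fintype.ofFinite K
  have hcard : Fintype.card K = q ^ j := by
    rw [← hroot]
    exact (Fintype.card_congr ((Equiv.setCongr huniv).trans (Equiv.Set.univ K))).symm
  have hrank : Module.finrank F K = j := by
    have h1 : Fintype.card K = q ^ Module.finrank F K := Module.card_eq_pow_finrank
    exact Nat.pow_right_injective hq1 (h1.symm.trans hcard)
  exact ⟨K, inferInstance, inferInstance, inferInstance, hcard,
    ⟨Module.finBasisOfFinrankEq F K hrank⟩⟩

lemma exists_scalarTN_main (K : Type*) [Field K] [Fintype K] (r u : ℕ)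
    (hu : 0 < u) (hru : r + u ≤ Fintype.card K + 1) :
    ∃ M : Matrix (Fin r) (Fin u) K, ScalarTN M := by
  classical
  set N := Fintype.card K with hN
  have hrN : r ≤ N := by omega
  let e : Fin N ≃ K := (Fintype.equivFin K).symm
  let a : Fin r → K := fun i => e ⟨i, lt_of_lt_of_le i.2 hrN⟩
  have ha : Function.Injective a := by
    intro i i' h
    have := e.injective h
    exact Fin.ext (Fin.mk.inj_iff.mp this)
  let P : Fin r → K[X] := fun i => ∏ m ∈ Finset.univ.erase i, (X - C (a m))
  have hPmonic : ∀ i, (P i).Monic := fun i => monic_prod_of_monic _ _ fun m _ => monic_X_sub_C _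
  have hPdeg : ∀ i, (P i).natDegree = r - 1 := by
    intro i
    rw [show P i = ∏ m ∈ Finset.univ.erase i, (X - C (a m)) from rfl,
      natDegree_prod _ _ fun m _ => X_sub_C_ne_zero _]
    simp [natDegree_X_sub_C, Finset.card_erase_of_mem]
  have hProot : ∀ i m, m ≠ i → (P i).eval (a m) = 0 := by
    intro i m hmi
    rw [show P i = ∏ m ∈ Finset.univ.erase i, (X - C (a m)) from rfl, eval_prod]
    refine Finset.prod_eq_zero (Finset.mem_erase.mpr ⟨hmi, Finset.mem_univ m⟩) ?_
    simp
  have hPself : ∀ i, (P i).eval (a i) ≠ 0 := by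
    intro i
    rw [show P i = ∏ m ∈ Finset.univ.erase i, (X - C (a m)) from rfl, eval_prod]
    rw [Finset.prod_ne_zero_iff]
    intro m hm
    have : m ≠ i := (Finset.mem_erase.mp hm).1
    simp only [eval_sub, eval_X, eval_C]
    exact sub_ne_zero.mpr fun h => this (ha h).symm
  refine ⟨Matrix.of fun i k => if h : r + (k : ℕ) < N then (P i).eval (e ⟨r + k, h⟩) else 1, ?_⟩
  intro k ρ σ hρ hσ
  by_contra hdet
  obtain ⟨c, hc0, hcM⟩ := Matrix.exists_vecMul_eq_zero_iff.mpr hdet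
  have hk1 : 1 ≤ k := by
    rcases Nat.eq_zero_or_pos k with rfl | hk
    · exact absurd (Subsingleton.elim c 0) hc0
    · exact hk
  have hkr : k ≤ r := by
    have := Fintype.card_le_of_injective ρ hρ; simpa using this
  have hcol : ∀ qq : Fin k, r + (σ qq : ℕ) ≤ N := fun qq => by
    have := (σ qq).2; omega
  set f : K[X] := ∑ p, C (c p) * P (ρ p) with hf
  have hfdeg : f.natDegree ≤ r - 1 := by
    refine natDegree_sum_le_of_forall_le _ _ fun p _ => ?_
    exact le_trans (natDegree_C_mul_le _ _) (le_of_eq (hPdeg _))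
  have hsum : ∀ qq : Fin k, ∑ p, c p *
      (if h : r + ((σ qq) : ℕ) < N then (P (ρ p)).eval (e ⟨r + σ qq, h⟩) else 1) = 0 := by
    intro qq
    have := congrFun hcM qq
    simpa [Matrix.vecMul, dotProduct] using this
  have heval_a : ∀ m, m ∉ Set.range ρ → f.eval (a m) = 0 := by
    intro m hm
    rw [hf, eval_finset_sum]
    refine Finset.sum_eq_zero fun p _ => ?_
    rw [eval_mul, eval_C, hProot (ρ p) m (fun h => hm ⟨p, h.symm⟩), mul_zero]
  have heval_b : ∀ qq : Fin k, ∀ h : r + ((σ qq) : ℕ) < N, f.eval (e ⟨r + σ qq, h⟩) = 0 := by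
    intro qq h
    rw [hf, eval_finset_sum]
    have hs := hsum qq
    simp only [dif_pos h] at hs
    simpa [eval_mul, eval_C] using hs
  -- the family of roots of f
  let ι := {m : Fin r // m ∉ Set.range ρ} ⊕ {qq : Fin k // r + ((σ qq) : ℕ) < N}
  let nidx : ι → ℕ := Sum.elim (fun m => (m.1 : ℕ)) (fun qq => r + ((σ qq.1) : ℕ))
  have hnidxlt : ∀ x, nidx x < N := by
    rintro (⟨m, hm⟩ | ⟨qq, h⟩)
    · exact lt_of_lt_of_le m.2 hrN
    · exact h
  let w : ι → K := fun x => e ⟨nidx x, hnidxlt x⟩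
  have hnidx_inj : Function.Injective nidx := by
    rintro (⟨m, hm⟩ | ⟨q1, h1⟩) (⟨m', hm'⟩ | ⟨q2, h2⟩) h <;>
      simp only [nidx, Sum.elim_inl, Sum.elim_inr] at h
    · exact congrArg Sum.inl (Subtype.ext (Fin.ext h))
    · exact absurd h (by have := m.isLt; omega)
    · exact absurd h (by have := m'.isLt; omega)
    · have hσeq : σ q1 = σ q2 := Fin.ext (by omega)
      exact congrArg Sum.inr (Subtype.ext (hσ hσeq))
  have hw_inj : Function.Injective w := by
    intro x y h
    exact hnidx_inj (Fin.mk.inj_iff.mp (e.injective h))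
  have hw_eval : ∀ x, f.eval (w x) = 0 := by
    rintro (⟨m, hm⟩ | ⟨qq, h⟩)
    · exact heval_a m hm
    · exact heval_b qq h
  have hcard1 : Fintype.card {m : Fin r // m ∉ Set.range ρ} = r - k := by
    have h1 : Fintype.card {m : Fin r // m ∈ Set.range ρ} = k := by
      rw [Fintype.card_of_subtype (Finset.image ρ Finset.univ)
        (by intro x; simp [Set.mem_range])]
      rw [Finset.card_image_of_injective _ hρ, Finset.card_univ, Fintype.card_fin]
    rw [Fintype.card_subtype_compl, h1, Fintype.card_fin]
  have hf0 : f = 0 := by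
    by_cases hinf : ∀ qq : Fin k, r + ((σ qq) : ℕ) < N
    · have hcard2 : Fintype.card {qq : Fin k // r + ((σ qq) : ℕ) < N} = k := by
        simpa using Fintype.card_congr (Equiv.subtypeUnivEquiv hinf)
      have hcardι : Fintype.card ι = r := by
        show Fintype.card ({m : Fin r // m ∉ Set.range ρ} ⊕
          {qq : Fin k // r + ((σ qq) : ℕ) < N}) = r
        rw [Fintype.card_sum, hcard1, hcard2]; omega
      exact eq_zero_of_natDegree_lt_card_of_eval_eq_zero f hw_inj hw_eval
        (by rw [hcardι]; omega)
    · push_neg at hinf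
      obtain ⟨q0, hq0⟩ := hinf
      have hq0' : ¬ (r + ((σ q0) : ℕ) < N) := not_lt.mpr hq0
      have huniq : ∀ qq, ¬ (r + ((σ qq) : ℕ) < N) → qq = q0 := by
        intro qq h
        have h1 : ((σ qq) : ℕ) = ((σ q0) : ℕ) := by
          have := hcol qq; have := hcol q0; omega
        exact hσ (Fin.ext h1)
      have hone : Fintype.card {qq : Fin k // ¬ (r + ((σ qq) : ℕ) < N)} = 1 := by
        rw [Fintype.card_eq_one_iff]
        exact ⟨⟨q0, hq0'⟩, fun y => Subtype.ext (huniq y.1 y.2)⟩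
      have hcard2 : Fintype.card {qq : Fin k // r + ((σ qq) : ℕ) < N} = k - 1 := by
        have hcompl := Fintype.card_subtype_compl (fun qq : Fin k => r + ((σ qq) : ℕ) < N)
        rw [hone, Fintype.card_fin] at hcompl
        have hle := Fintype.card_subtype_le (fun qq : Fin k => r + ((σ qq) : ℕ) < N)
        rw [Fintype.card_fin] at hle
        omega
      have hcardι : Fintype.card ι = r - 1 := by
        show Fintype.card ({m : Fin r // m ∉ Set.range ρ} ⊕
          {qq : Fin k // r + ((σ qq) : ℕ) < N}) = r - 1
        rw [Fintype.card_sum, hcard1, hcard2]; omega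
      have hcsum : ∑ p, c p = 0 := by
        have hs := hsum q0
        simpa only [dif_neg hq0', mul_one] using hs
      have hcoeff : f.coeff (r - 1) = 0 := by
        rw [hf, finset_sum_coeff]
        have hcp : ∀ p : Fin k, (P (ρ p)).coeff (r - 1) = 1 := by
          intro p
          have h2 := (hPmonic (ρ p)).coeff_natDegree
          rwa [hPdeg] at h2
        simp only [coeff_C_mul, hcp, mul_one]
        exact hcsum
      by_contra hfne
      have hne : f.natDegree ≠ r - 1 := by
        intro hEq
        exact Polynomial.leadingCoeff_ne_zero.mpr hfne
          (by rwa [Polynomial.leadingCoeff, hEq])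
      exact hfne (eq_zero_of_natDegree_lt_card_of_eval_eq_zero f hw_inj hw_eval
        (by rw [hcardι]; omega))
  have hcp : ∀ p, c p = 0 := by
    intro p
    have h0 : f.eval (a (ρ p)) = 0 := by rw [hf0, eval_zero]
    rw [hf, eval_finset_sum] at h0
    have hsingle : (∑ p' : Fin k, (C (c p') * P (ρ p')).eval (a (ρ p)))
        = c p * (P (ρ p)).eval (a (ρ p)) := by
      rw [Finset.sum_eq_single p]
      · rw [eval_mul, eval_C]
      · intro p' _ hne
        rw [eval_mul, eval_C, hProot (ρ p') (ρ p) (fun h => hne (hρ h).symm), mul_zero]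
      · intro h; exact absurd (Finset.mem_univ p) h
    rw [hsingle] at h0
    exact (mul_eq_zero.mp h0).resolve_right (hPself (ρ p))
  exact hc0 (funext fun p => hcp p)

lemma exists_scalarTN_exceptional (K : Type*) [Field K] [Fintype K] [CharP K 2] (u : ℕ)
    (hu : u + 1 ≤ Fintype.card K) :
    ∃ M : Matrix (Fin 3) (Fin u) K, ScalarTN M := by
  classical
  -- choose u distinct nonzero elements
  have hcard : Fintype.card (Fin u) ≤ Fintype.card {y : K // y ≠ 0} := by
    rw [Fintype.card_fin, Fintype.card_subtype_compl, Fintype.card_subtype_eq (0 : K)]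
    omega
  obtain ⟨w⟩ := Function.Embedding.nonempty_of_card_le hcard
  let x : Fin u → K := fun kk => (w kk).1
  have hx0 : ∀ kk, x kk ≠ 0 := fun kk => (w kk).2
  have hxinj : Function.Injective x := fun a b h => w.injective (Subtype.ext h)
  refine ⟨Matrix.of fun i kk => x kk ^ (i : ℕ), ?_⟩
  intro k ρ σ hρ hσ
  have hk3 : k ≤ 3 := by
    have := Fintype.card_le_of_injective ρ hρ; simpa using this
  interval_cases k
  · simp [Matrix.det_fin_zero]
  · rw [Matrix.det_fin_one]
    exact pow_ne_zero _ (hx0 _)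
  · rw [Matrix.det_fin_two]
    simp only [Matrix.submatrix_apply, Matrix.of_apply]
    set t0 := x (σ 0) with ht0
    set t1 := x (σ 1) with ht1
    have htne : t0 ≠ t1 := fun h => (by decide : (0 : Fin 2) ≠ 1) (hσ (hxinj h))
    have ht0' : t0 ≠ 0 := hx0 (σ 0)
    have ht1' : t1 ≠ 0 := hx0 (σ 1)
    have hρne : ρ 0 ≠ ρ 1 := fun h => (by decide : (0 : Fin 2) ≠ 1) (hρ h)
    -- case on the values of ρ 0, ρ 1
    intro hcontra
    set A := ((ρ 0 : ℕ)) with hA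
    set B := ((ρ 1 : ℕ)) with hB
    have hAB : A ≠ B := fun h => hρne (Fin.ext h)
    have hA3 : A < 3 := (ρ 0).isLt
    have hB3 : B < 3 := (ρ 1).isLt
    have hsq : ∀ y z : K, y ^ 2 = z ^ 2 → y = z := fun y z h => by
      have h2 := frobenius_inj K 2
      exact h2 (by simpa [frobenius_def] using h)
    have hmul : ∀ y z : K, y ≠ 0 → z ≠ 0 → y * z * (z - y) = 0 → y = z := by
      intro y z hy hz h
      rcases mul_eq_zero.mp h with h' | h'
      · rcases mul_eq_zero.mp h' with h'' | h''
        · exact absurd h'' hy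
        · exact absurd h'' hz
      · exact (sub_eq_zero.mp h').symm
    have key : t0 ^ A * t1 ^ B = t1 ^ A * t0 ^ B := sub_eq_zero.mp hcontra
    have hmain : t0 = t1 := by
      interval_cases A <;> interval_cases B
      · exact absurd rfl hAB
      · simp only [pow_zero, pow_one, one_mul, mul_one] at key; exact key.symm
      · simp only [pow_zero, pow_one, one_mul, mul_one] at key; exact (hsq t1 t0 key).symm
      · simp only [pow_zero, pow_one, one_mul, mul_one] at key; exact key
      · exact absurd rfl hAB
      · simp only [pow_zero, pow_one, one_mul, mul_one] at key
        exact hmul t0 t1 ht0' ht1' (by linear_combination key)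
      · simp only [pow_zero, pow_one, one_mul, mul_one] at key; exact hsq t0 t1 key
      · simp only [pow_zero, pow_one, one_mul, mul_one] at key
        exact hmul t0 t1 ht0' ht1' (by linear_combination (-1 : K) * key)
      · exact absurd rfl hAB
    exact htne hmain
  · -- k = 3
    have hbij : Function.Bijective ρ := Finite.injective_iff_bijective.mp hρ
    let π : Equiv.Perm (Fin 3) := Equiv.ofBijective ρ hbij
    have hmat : (Matrix.of fun (i : Fin 3) (kk : Fin u) => x kk ^ (i : ℕ)).submatrix ρ σ
        = ((Matrix.vandermonde (fun q => x (σ q)))ᵀ).submatrix π id := by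
      ext p q
      simp [Matrix.vandermonde, π, Equiv.ofBijective]
    rw [hmat, Matrix.det_permute, Matrix.det_transpose]
    have hvinj : Function.Injective (fun q => x (σ q)) := hxinj.comp hσ
    have hv := Matrix.det_vandermonde_ne_zero_iff.mpr hvinj
    intro hcontra
    rcases mul_eq_zero.mp hcontra with h' | h'
    · rcases Int.units_eq_one_or (Equiv.Perm.sign π) with hs | hs <;> rw [hs] at h' <;>
        simp at h'
    · exact hv h'

/-- Let F be a finite field with q elements and s, d, t positive
integers with s > dt.  Let j be a positive integer such that either q^j + 1 ≥ s, or
q^j is even, s − dt ∈ {3, q^j − 1}, and q^j + 2 ≥ s.  Then there exists a block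
totally nonsingular (s − dt) × dt array of invertible j × j blocks over F. -/
theorem stmt_15 {F : Type*} [Field F] [Fintype F] {q s d t j : ℕ}
    (hq : Fintype.card F = q)
    (hs : 0 < s) (hd : 0 < d) (ht : 0 < t) (hst : d * t < s) (hj : 0 < j)
    (hcond : s ≤ q ^ j + 1 ∨
      (Even (q ^ j) ∧ (s - d * t = 3 ∨ s - d * t = q ^ j - 1) ∧ s ≤ q ^ j + 2)) :
    ∃ A : Matrix (Fin (s - d * t) × Fin j) (Fin (d * t) × Fin j) F,
      IsBlockTotallyNonsingular A := by
  classical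
  obtain ⟨K, fK, aK, tK, hcardK, ⟨b⟩⟩ := exists_extension F j hj
  rw [hq] at hcardK
  have hu0 : 0 < d * t := Nat.mul_pos hd ht
  have hq2 : 2 ≤ q := hq ▸ Fintype.one_lt_card
  have hQ2 : 2 ≤ q ^ j := Nat.one_lt_pow hj.ne' hq2
  have hM : ∃ M : Matrix (Fin (s - d * t)) (Fin (d * t)) K, ScalarTN M := by
    by_cases hs1 : s ≤ q ^ j + 1
    · exact exists_scalarTN_main K _ _ hu0 (by rw [hcardK]; omega)
    · rcases hcond with h | ⟨heven, hcase, hs2⟩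
      · exact absurd h hs1
      · have hseq : s = q ^ j + 2 := by omega
        -- char 2
        have hp2 : ringChar K = 2 := by
          haveI : Fact (Nat.Prime (ringChar K)) := ⟨CharP.char_is_prime K (ringChar K)⟩
          obtain ⟨n, hpr, hcard⟩ := FiniteField.card K (ringChar K)
          have h2 : (2 : ℕ) ∣ ringChar K ^ (n : ℕ) := by
            rw [← hcard, hcardK]; exact heven.two_dvd
          exact ((Nat.prime_dvd_prime_iff_eq Nat.prime_two hpr).mp
            (Nat.Prime.dvd_of_dvd_pow Nat.prime_two h2)).symm
        haveI : CharP K 2 := hp2 ▸ ringChar.charP K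
        rcases hcase with h3 | hQ1
        · -- s - d*t = 3, so d*t = q^j - 1
          obtain ⟨M0, hM0⟩ := exists_scalarTN_exceptional K (d * t)
            (by rw [hcardK]; omega)
          exact ⟨M0.submatrix (Fin.cast h3) id,
            hM0.submatrix _ _ (Fin.cast_injective h3) Function.injective_id⟩
        · -- s - d*t = q^j - 1, so d*t = 3
          have hu3 : d * t = 3 := by omega
          obtain ⟨M0, hM0⟩ := exists_scalarTN_exceptional K (q ^ j - 1)
            (by rw [hcardK]; omega)
          exact ⟨M0ᵀ.submatrix (Fin.cast hQ1) (Fin.cast hu3),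
            (hM0.transpose).submatrix _ _ (Fin.cast_injective hQ1)
              (Fin.cast_injective hu3)⟩
  obtain ⟨M, hM⟩ := hM
  exact ⟨_, blockTN_of_scalarTN b M hM⟩
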